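/- Let h : ℝ → ℝ be differentiable (the barrier value along a trajectory), ω : ℝ≥0 → ℝ≥0 a strictly increasing continuous function with ω(0) = 0, θ ∈ (0,1), and d > 0. Suppose h(t₀) ≥ 0 and h'(t) > -ω(max(h(t),0)) + θ·d for all t in [t₀, t₁]. Then h(t) ≥ 0 for all t ∈ [t₀, t₁], and moreover h(t₁) > 0 if t₁ > t₀. -/

import Mathlib

/-- Safety during the "controller on" phase (Theorem 2): if `h t₀ ≥ 0` and
`h' t > -ω(max (h t) 0) + θ d` on `[t₀, t₁]`, with `ω` class-K, `θ ∈ (0,1)`, `d > 0`,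
then `h` stays nonnegative and ends strictly positive if `t₁ > t₀`. -/
theorem stmt_2 (h : ℝ → ℝ) (ω : ℝ → ℝ) (θ d t₀ t₁ : ℝ)
    (hh : Differentiable ℝ h)
    (hω_cont : ContinuousOn ω (Set.Ici 0))
    (hω_mono : StrictMonoOn ω (Set.Ici 0))
    (hω0 : ω 0 = 0)
    (hω_nonneg : ∀ s, 0 ≤ s → 0 ≤ ω s)
    (hθ : θ ∈ Set.Ioo (0 : ℝ) 1) (hd : 0 < d)
    (h0 : 0 ≤ h t₀)
    (hderiv : ∀ t ∈ Set.Icc t₀ t₁, deriv h t > -ω (max (h t) 0) + θ * d) :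
    (∀ t ∈ Set.Icc t₀ t₁, 0 ≤ h t) ∧ (t₀ < t₁ → 0 < h t₁) := by
  have key : ∀ t ∈ Set.Icc t₀ t₁, 0 ≤ h t := by
    intro t ht
    by_contra hneg
    push_neg at hneg
    have ht0t : t₀ ≤ t := ht.1
    set S : Set ℝ := Set.Icc t₀ t ∩ h ⁻¹' (Set.Ici 0) with hS
    have hSne : S.Nonempty := ⟨t₀, ⟨le_refl _, ht0t⟩, h0⟩
    have hScomp : IsCompact S :=
      isCompact_Icc.inter_right (isClosed_Ici.preimage hh.continuous)
    have hsmem : sSup S ∈ S := hScomp.sSup_mem hSne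
    set s := sSup S with hsdef
    have hsub : S ⊆ Set.Icc t₀ t := Set.inter_subset_left
    have hs_le_t : s ≤ t := (hsub hsmem).2
    have ht₀_le_s : t₀ ≤ s := (hsub hsmem).1
    have hhs : 0 ≤ h s := hsmem.2
    have hst : s < t := by
      rcases lt_or_eq_of_le hs_le_t with h' | h'
      · exact h'
      · rw [h'] at hhs; linarith
    have hneg' : ∀ u, s < u → u ≤ t → h u < 0 := by
      intro u hu1 hu2
      by_contra hc
      push_neg at hc
      have : u ∈ S := ⟨⟨ht₀_le_s.trans hu1.le, hu2⟩, hc⟩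
      exact absurd (le_csSup hScomp.bddAbove this) (not_le.2 hu1)
    have hhs0 : h s = 0 := by
      have h1 : Filter.Tendsto h (nhdsWithin s (Set.Ioi s)) (nhds (h s)) :=
        (hh.continuous.tendsto s).mono_left nhdsWithin_le_nhds
      have h2 : ∀ᶠ u in nhdsWithin s (Set.Ioi s), h u ≤ 0 := by
        filter_upwards [Ioo_mem_nhdsGT_of_mem (Set.left_mem_Ico.2 hst)] with u hu
        exact (hneg' u hu.1 hu.2.le).le
      exact le_antisymm (le_of_tendsto h1 h2) hhs
    have hds : 0 < deriv h s := by
      have := hderiv s ⟨ht₀_le_s, hs_le_t.trans ht.2⟩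
      rw [hhs0] at this
      simp only [max_self, hω0] at this
      nlinarith [hθ.1]
    have hslope : Filter.Tendsto (slope h s) (nhdsWithin s {s}ᶜ) (nhds (deriv h s)) :=
      hasDerivAt_iff_tendsto_slope.mp (hh s).hasDerivAt
    have hslope' : Filter.Tendsto (slope h s) (nhdsWithin s (Set.Ioi s)) (nhds (deriv h s)) :=
      hslope.mono_left (nhdsWithin_mono s (fun x hx => ne_of_gt hx))
    have hev : ∀ᶠ u in nhdsWithin s (Set.Ioi s), 0 < slope h s u :=
      hslope'.eventually (eventually_gt_nhds hds)
    have hev2 : ∀ᶠ u in nhdsWithin s (Set.Ioi s), u ≤ t ∧ s < u := by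
      filter_upwards [Ioo_mem_nhdsGT_of_mem (Set.left_mem_Ico.2 hst)] with u hu
      exact ⟨hu.2.le, hu.1⟩
    obtain ⟨u, hu1, hu2, hu3⟩ := (hev.and hev2).exists
    have hupos : 0 < h u := by
      rw [slope_def_field] at hu1
      have hus : 0 < u - s := sub_pos.2 hu3
      have h4 : 0 < (h u - h s) / (u - s) * (u - s) := mul_pos hu1 hus
      rw [div_mul_cancel₀ _ hus.ne'] at h4
      linarith
    exact absurd hupos (not_lt.2 (hneg' u hu3 hu2).le)
  refine ⟨key, fun ht01 => ?_⟩
  have ht1mem : t₁ ∈ Set.Icc t₀ t₁ := ⟨ht01.le, le_refl _⟩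
  have h1nn : 0 ≤ h t₁ := key t₁ ht1mem
  rcases h1nn.lt_or_eq with hpos | heq
  · exact hpos
  exfalso
  -- h t₁ = 0; ω(max (h t) 0) → 0 near t₁, so deriv h > 0 near t₁
  have hmax : Filter.Tendsto (fun t => max (h t) 0) (nhds t₁) (nhdsWithin 0 (Set.Ici 0)) := by
    apply tendsto_nhdsWithin_of_tendsto_nhds_of_eventually_within
    · have : Continuous fun t => max (h t) 0 := hh.continuous.max continuous_const
      have := this.tendsto t₁
      rwa [show max (h t₁) 0 = 0 by rw [← heq]; simp] at this
    · exact Filter.Eventually.of_forall fun t => Set.mem_Ici.2 (le_max_right _ _)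
  have hωt : Filter.Tendsto (fun t => ω (max (h t) 0)) (nhds t₁) (nhds 0) := by
    have := (hω_cont 0 Set.self_mem_Ici).tendsto.comp hmax
    rwa [hω0] at this
  have hθd : 0 < θ * d := mul_pos hθ.1 hd
  have hev : ∀ᶠ t in nhds t₁, ω (max (h t) 0) < θ * d :=
    hωt.eventually (eventually_lt_nhds hθd)
  rw [Metric.eventually_nhds_iff] at hev
  obtain ⟨δ, hδ, hball⟩ := hev
  set c := max t₀ (t₁ - δ / 2) with hc
  have hct1 : c < t₁ := by
    apply max_lt ht01; linarith
  have ht0c : t₀ ≤ c := le_max_left _ _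
  have hdpos : ∀ x ∈ Set.Ioo c t₁, 0 < deriv h x := by
    intro x hx
    have hxmem : x ∈ Set.Icc t₀ t₁ := ⟨ht0c.trans hx.1.le, hx.2.le⟩
    have hdist : dist x t₁ < δ := by
      rw [Real.dist_eq, abs_of_nonpos (by linarith [hx.2.le])]
      have : t₁ - δ / 2 ≤ c := le_max_right _ _
      linarith [hx.1]
    have := hderiv x hxmem
    have := hball hdist
    linarith
  obtain ⟨x, hx, hxeq⟩ := exists_hasDerivAt_eq_slope h (deriv h) hct1
    hh.continuous.continuousOn (fun y _ => (hh y).hasDerivAt)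
  have : 0 < (h t₁ - h c) / (t₁ - c) := by rw [← hxeq]; exact hdpos x hx
  have hcnn : 0 ≤ h c := key c ⟨ht0c, hct1.le⟩
  have htc : 0 < t₁ - c := sub_pos.2 hct1
  have h4 : 0 < (h t₁ - h c) / (t₁ - c) * (t₁ - c) := mul_pos this htc
  rw [div_mul_cancel₀ _ htc.ne'] at h4
  linarith
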